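/- arXiv:2505.03657 — 2 statements merged into one kernel-verified Lean document; each statement's English description precedes it below -/
import Mathlib

section
/- Let (T0, T̃0) be a pair of densely defined linear operators with common dense domain D on a complex Hilbert space H satisfying conditions (T1) and (T2). Then the kernel of the boundary form is W0, i.e. for u ∈ W: u ∈ W0 if and only if [u|v] = 0 for all v ∈ W; equivalently W^[⊥] = W0 and W0^[⊥] = W. -/
open scoped InnerProductSpace
open Filter Topology LinearPMap

noncomputable section

variable {H : Type*} [NormedAddCommGroup H] [InnerProductSpace ℂ H] [CompleteSpace H]

/-- The inner product used in the paper (antilinear in the **second** entry):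
`pInner x y = ⟪y, x⟫` in Mathlib's convention. -/
def pInner {H : Type*} [NormedAddCommGroup H] [InnerProductSpace ℂ H] (x y : H) : ℂ :=
  ⟪y, x⟫_ℂ

/-- A pair of densely defined operators with common domain satisfying conditions (T1) and (T2). -/
structure IsDualPairT12 (T0 T0t : H →ₗ.[ℂ] H) (lam : ℝ) : Prop where
  dom_eq : T0.domain = T0t.domain
  dense' : Dense (T0.domain : Set H)
  sym : ∀ (φ : T0.domain) (ψ : T0t.domain), pInner (T0 φ) (ψ : H) = pInner (φ : H) (T0t ψ)
  lam_pos : 0 < lam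
  bound : ∀ (x : H) (hx : x ∈ T0.domain),
    ‖T0 ⟨x, hx⟩ + T0t ⟨x, dom_eq.le hx⟩‖ ≤ 2 * lam * ‖x‖

/-- A joint pair of abstract Friedrichs operators: (T1), (T2) and (T3). -/
structure IsFriedrichsPair (T0 T0t : H →ₗ.[ℂ] H) (lam mu : ℝ)
    extends IsDualPairT12 T0 T0t lam : Prop where
  mu_pos : 0 < mu
  coercive : ∀ (x : H) (hx : x ∈ T0.domain),
    2 * mu * ‖x‖ ^ 2 ≤ (pInner (T0 ⟨x, hx⟩ + T0t ⟨x, dom_eq.le hx⟩) x).re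

/-- The boundary form `[u|v] := ⟨T₁u , v⟩ − ⟨u , T̃₁v⟩` on the graph space
`W := dom T₁ = dom (T̃₀)*`.  The hypothesis `hW` expresses the fact `dom T₁ = dom T̃₁`. -/
def bform (T0 T0t : H →ₗ.[ℂ] H) (hW : T0t.adjoint.domain = T0.adjoint.domain)
    (u v : T0t.adjoint.domain) : ℂ :=
  pInner (T0t.adjoint u) (v : H) - pInner (u : H) (T0.adjoint ⟨(v : H), hW.le v.2⟩)

/-- `X^[⊥]`, the `[·|·]`-orthogonal complement of `X ⊆ W` in the graph space. -/
def iorth (T0 T0t : H →ₗ.[ℂ] H) (hW : T0t.adjoint.domain = T0.adjoint.domain)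
    (X : Set ↥T0t.adjoint.domain) : Set ↥T0t.adjoint.domain :=
  {u | ∀ v ∈ X, bform T0 T0t hW u v = 0}

/-- `W⁺ = {u ∈ W : [u|u] ≥ 0}`. -/
def Wplus (T0 T0t : H →ₗ.[ℂ] H) (hW : T0t.adjoint.domain = T0.adjoint.domain) :
    Set ↥T0t.adjoint.domain :=
  {u | 0 ≤ (bform T0 T0t hW u u).re}

/-- `W⁻ = {u ∈ W : [u|u] ≤ 0}`. -/
def Wminus (T0 T0t : H →ₗ.[ℂ] H) (hW : T0t.adjoint.domain = T0.adjoint.domain) :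
    Set ↥T0t.adjoint.domain :=
  {u | (bform T0 T0t hW u u).re ≤ 0}

/-- (V)-boundary conditions for a subset `V` of the graph space `W`. -/
def VBC (T0 T0t : H →ₗ.[ℂ] H) (hW : T0t.adjoint.domain = T0.adjoint.domain)
    (V : Set ↥T0t.adjoint.domain) : Prop :=
  V ⊆ Wplus T0 T0t hW ∧ iorth T0 T0t hW V ⊆ Wminus T0 T0t hW ∧
    V = iorth T0 T0t hW (iorth T0 T0t hW V)

/-- The graph norm `‖u‖_{T₁} = ‖u‖ + ‖T₁ u‖` on the graph space. -/
def gnorm (T0t : H →ₗ.[ℂ] H) (u : T0t.adjoint.domain) : ℝ :=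
  ‖(u : H)‖ + ‖T0t.adjoint u‖

/-- The distance associated with the graph norm. -/
def gdist (T0t : H →ₗ.[ℂ] H) (u v : T0t.adjoint.domain) : ℝ := gnorm T0t (u - v)

/-- Closedness (sequential) in the graph-norm topology of `W`. -/
def GClosed (T0t : H →ₗ.[ℂ] H) (X : Set ↥T0t.adjoint.domain) : Prop :=
  ∀ f : ℕ → ↥T0t.adjoint.domain, (∀ n, f n ∈ X) →
    ∀ l, Tendsto (fun n => gdist T0t (f n) l) atTop (𝓝 0) → l ∈ X

/-- `W₀` (the domain of the closure of `T₀`), viewed as a subset of the graph space `W`. -/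
def W0set (T0 T0t : H →ₗ.[ℂ] H) : Set ↥T0t.adjoint.domain :=
  {u | (u : H) ∈ T0.closure.domain}

/-- The graph inner product on `W` (in the paper's convention). -/
def gip (T0t : H →ₗ.[ℂ] H) (u v : ↥T0t.adjoint.domain) : ℂ :=
  pInner (u : H) (v : H) + pInner (T0t.adjoint u) (T0t.adjoint v)

/-- The (Hilbert) orthogonal complement of `W₀` in the graph space. -/
def W0perp (T0 T0t : H →ₗ.[ℂ] H) : Set ↥T0t.adjoint.domain :=
  {u | ∀ v : ↥T0t.adjoint.domain, (v : H) ∈ T0.closure.domain → gip T0t u v = 0}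

/-- `ker T₁` as a subset of the graph space. -/
def kerT1set (T0t : H →ₗ.[ℂ] H) : Set ↥T0t.adjoint.domain := {u | T0t.adjoint u = 0}

/-- `ker T̃₁` as a subset of the graph space. -/
def kerT1tset (T0 T0t : H →ₗ.[ℂ] H) (hW : T0t.adjoint.domain = T0.adjoint.domain) :
    Set ↥T0t.adjoint.domain :=
  {u | T0.adjoint ⟨(u : H), hW.le u.2⟩ = 0}

/-- An operator `M ∈ L(W;W')`, encoded through the pairing `m u v = ⟨Mu, v⟩_{W',W}`
(linear in `u`, antilinear in `v`, and bounded with respect to the graph norm). -/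
structure MOp (T0t : H →ₗ.[ℂ] H) where
  m : ↥T0t.adjoint.domain → ↥T0t.adjoint.domain → ℂ
  add_left : ∀ u v w, m (u + v) w = m u w + m v w
  smul_left : ∀ (c : ℂ) (u w), m (c • u) w = c * m u w
  add_right : ∀ u v w, m u (v + w) = m u v + m u w
  smul_right : ∀ (c : ℂ) (u w), m u (c • w) = starRingEnd ℂ c * m u w
  bounded : ∃ C, ∀ u v, ‖m u v‖ ≤ C * (gnorm T0t u * gnorm T0t v)

/-- The (M)-boundary conditions for a pairing `m u v = ⟨Mu, v⟩_{W',W}`: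
(M1) non-negativity and (M2) `W = ker (D − M) + ker (D + M)`. -/
def MBC (T0 T0t : H →ₗ.[ℂ] H) (hW : T0t.adjoint.domain = T0.adjoint.domain)
    (m : ↥T0t.adjoint.domain → ↥T0t.adjoint.domain → ℂ) : Prop :=
  (∀ u, 0 ≤ (m u u).re) ∧
  (∀ w : ↥T0t.adjoint.domain, ∃ a b : ↥T0t.adjoint.domain,
    (∀ v, bform T0 T0t hW a v = m a v) ∧ (∀ v, bform T0 T0t hW b v + m b v = 0) ∧ w = a + b)

/-- `ker (D − M)` for a pairing `m`. -/
def kerDsubM (T0 T0t : H →ₗ.[ℂ] H) (hW : T0t.adjoint.domain = T0.adjoint.domain)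
    (m : ↥T0t.adjoint.domain → ↥T0t.adjoint.domain → ℂ) : Set ↥T0t.adjoint.domain :=
  {u | ∀ v, bform T0 T0t hW u v = m u v}

/-- `ker (D + M)` for a pairing `m`. -/
def kerDaddM (T0 T0t : H →ₗ.[ℂ] H) (hW : T0t.adjoint.domain = T0.adjoint.domain)
    (m : ↥T0t.adjoint.domain → ↥T0t.adjoint.domain → ℂ) : Set ↥T0t.adjoint.domain :=
  {u | ∀ v, bform T0 T0t hW u v + m u v = 0}

lemma adjoint_graph_closed' (T : H →ₗ.[ℂ] H) (hT : Dense (T.domain : Set H)) :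
    IsClosed (T.adjoint.graph : Set (H × H)) := by
  have h : (T.adjoint.graph : Set (H × H)) =
      ⋂ (x : T.domain), {p : H × H | ⟪p.2, (x : H)⟫_ℂ = ⟪p.1, T x⟫_ℂ} := by
    ext p
    simp only [Set.mem_iInter, Set.mem_setOf_eq, SetLike.mem_coe, LinearPMap.mem_graph_iff]
    constructor
    · rintro ⟨y, hy1, hy2⟩ x
      rw [← hy1, ← hy2]
      exact LinearPMap.adjoint_isFormalAdjoint hT y x
    · intro hp
      have hm : p.1 ∈ T.adjoint.domain :=
        LinearPMap.mem_adjoint_domain_of_exists p.1 ⟨p.2, hp⟩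
      exact ⟨⟨p.1, hm⟩, rfl, LinearPMap.adjoint_apply_eq hT _ (fun x => hp x)⟩
  rw [h]
  exact isClosed_iInter fun x => isClosed_eq (continuous_snd.inner continuous_const)
    (continuous_fst.inner continuous_const)

omit [CompleteSpace H] in
lemma exists_seq_of_mem_closure_domain' (T : H →ₗ.[ℂ] H) (hT : T.IsClosable)
    {w : H} (hw : w ∈ T.closure.domain) :
    ∃ x : ℕ → T.domain, Tendsto (fun n => ((x n : H))) atTop (𝓝 w) ∧
      Tendsto (fun n => T (x n)) atTop (𝓝 (T.closure ⟨w, hw⟩)) := by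
  have hg : ((w, T.closure ⟨w, hw⟩) : H × H) ∈ T.closure.graph :=
    T.closure.mem_graph ⟨w, hw⟩
  rw [← hT.graph_closure_eq_closure_graph] at hg
  have hg' : ((w, T.closure ⟨w, hw⟩) : H × H) ∈ closure (T.graph : Set (H × H)) := by
    rw [← Submodule.topologicalClosure_coe]; exact hg
  obtain ⟨p, hpmem, hplim⟩ := mem_closure_iff_seq_limit.mp hg'
  choose x hx using fun n => T.mem_graph_iff'.mp (hpmem n)
  have h1 : Tendsto (fun n => (p n).1) atTop (𝓝 w) :=
    (continuous_fst.tendsto _).comp hplim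
  have h2 : Tendsto (fun n => (p n).2) atTop (𝓝 (T.closure ⟨w, hw⟩)) :=
    (continuous_snd.tendsto _).comp hplim
  refine ⟨x, ?_, ?_⟩
  · convert h1 using 2 with n
    rw [← hx n]
  · convert h2 using 2 with n
    rw [← hx n]

/-- Theorem 2.3 (vi), first part: the kernel of the boundary form is `W₀`:
for `u ∈ W`, `u ∈ W₀ ↔ [u|v] = 0` for all `v ∈ W`; equivalently `W^[⊥] = W₀`
and `W₀^[⊥] = W`. -/
theorem boundary_form_kernel_eq_W0
    (T0 T0t : H →ₗ.[ℂ] H) (lam : ℝ) (hP : IsDualPairT12 T0 T0t lam)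
    (hW : T0t.adjoint.domain = T0.adjoint.domain) :
    (∀ u : T0t.adjoint.domain,
      ((u : H) ∈ T0.closure.domain ↔ ∀ v, bform T0 T0t hW u v = 0)) ∧
    iorth T0 T0t hW Set.univ = W0set T0 T0t ∧
    iorth T0 T0t hW (W0set T0 T0t) = Set.univ := by
  have hD : Dense (T0.domain : Set H) := hP.dense'
  have hDt : Dense (T0t.domain : Set H) := hP.dom_eq ▸ hD
  have hsym : T0t.IsFormalAdjoint T0 := fun ψ φ => (hP.sym φ ψ).symm
  have hle : T0 ≤ T0t.adjoint := hsym.le_adjoint hDt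
  have hclosedT1 : IsClosed (T0t.adjoint.graph : Set (H × H)) := adjoint_graph_closed' T0t hDt
  have hgle : T0.graph ≤ T0t.adjoint.graph := LinearPMap.le_graph_of_le hle
  have hclosable : T0.IsClosable :=
    ((show T0t.adjoint.IsClosed from hclosedT1).isClosable).leIsClosable hle
  have hclgraph := hclosable.graph_closure_eq_closure_graph
  have hcl_le : T0.closure ≤ T0t.adjoint := by
    apply LinearPMap.le_of_le_graph
    rw [← hclgraph]
    exact Submodule.topologicalClosure_minimal T0.graph hgle hclosedT1
  have bform_eq : ∀ u v : T0t.adjoint.domain,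
      bform T0 T0t hW u v
        = ⟪(v : H), T0t.adjoint u⟫_ℂ - ⟪T0.adjoint ⟨(v : H), hW.le v.2⟩, (u : H)⟫_ℂ :=
    fun u v => rfl
  -- key A
  have keyA : ∀ u : T0t.adjoint.domain, (u : H) ∈ T0.closure.domain →
      ∀ v, bform T0 T0t hW u v = 0 := by
    intro u hu v
    obtain ⟨x, hx1, hx2⟩ := exists_seq_of_mem_closure_domain' T0 hclosable hu
    have hval : T0.closure ⟨(u : H), hu⟩ = T0t.adjoint u := hcl_le.2 rfl
    rw [bform_eq]
    have h1 : Tendsto (fun n => ⟪(v : H), T0 (x n)⟫_ℂ) atTop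
        (𝓝 ⟪(v : H), T0t.adjoint u⟫_ℂ) := by
      rw [← hval]; exact tendsto_const_nhds.inner hx2
    have h2 : Tendsto (fun n => ⟪T0.adjoint ⟨(v : H), hW.le v.2⟩, ((x n : H))⟫_ℂ) atTop
        (𝓝 ⟪T0.adjoint ⟨(v : H), hW.le v.2⟩, (u : H)⟫_ℂ) := tendsto_const_nhds.inner hx1
    have heq : (fun n => ⟪T0.adjoint ⟨(v : H), hW.le v.2⟩, ((x n : H))⟫_ℂ)
        = fun n => ⟪(v : H), T0 (x n)⟫_ℂ := by
      funext n
      exact LinearPMap.adjoint_isFormalAdjoint hD ⟨(v : H), hW.le v.2⟩ (x n)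
    rw [heq] at h2
    rw [tendsto_nhds_unique h1 h2, sub_self]
  -- key C
  have keyC : ∀ u v : T0t.adjoint.domain, (v : H) ∈ T0.closure.domain →
      bform T0 T0t hW u v = 0 := by
    intro u v hv
    obtain ⟨x, hx1, hx2⟩ := exists_seq_of_mem_closure_domain' T0 hclosable hv
    set cv := T0.closure ⟨(v : H), hv⟩ with hcv
    set xt : ℕ → H := fun n => T0t ⟨(x n : H), hP.dom_eq.le (x n).2⟩ with hxt
    have key : ∀ m n : ℕ, ‖(T0 (x m) + xt m) - (T0 (x n) + xt n)‖
        ≤ 2 * lam * ‖(x m : H) - (x n : H)‖ := by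
      intro m n
      have hbd := hP.bound (((x m - x n : T0.domain) : H)) (x m - x n).2
      have e1 : T0 ⟨((x m - x n : T0.domain) : H), (x m - x n).2⟩ = T0 (x m) - T0 (x n) := by
        show T0 (x m - x n) = _
        exact map_sub T0.toFun _ _
      have e2 : T0t ⟨((x m - x n : T0.domain) : H), hP.dom_eq.le (x m - x n).2⟩
          = xt m - xt n := by
        have hj : (⟨((x m - x n : T0.domain) : H), hP.dom_eq.le (x m - x n).2⟩ : T0t.domain)
            = (⟨(x m : H), hP.dom_eq.le (x m).2⟩ : T0t.domain)
              - ⟨(x n : H), hP.dom_eq.le (x n).2⟩ := by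
          apply Subtype.ext
          simp
        rw [hj]
        exact map_sub T0t.toFun _ _
      rw [e1, e2] at hbd
      have e3 : ((x m - x n : T0.domain) : H) = (x m : H) - (x n : H) := rfl
      rw [e3] at hbd
      calc ‖(T0 (x m) + xt m) - (T0 (x n) + xt n)‖
          = ‖(T0 (x m) - T0 (x n)) + (xt m - xt n)‖ := by congr 1; abel
        _ ≤ 2 * lam * ‖(x m : H) - (x n : H)‖ := hbd
    have hgC : CauchySeq (fun n => T0 (x n) + xt n) := by
      have hxC : CauchySeq (fun n => (x n : H)) := hx1.cauchySeq
      rw [Metric.cauchySeq_iff] at hxC ⊢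
      intro ε hε
      obtain ⟨N, hN⟩ := hxC (ε / (2 * lam + 1)) (div_pos hε (by have := hP.lam_pos; linarith))
      refine ⟨N, fun m hm n hn => ?_⟩
      have hd := hN m hm n hn
      rw [dist_eq_norm] at hd ⊢
      have h2l : (0:ℝ) < 2 * lam + 1 := by have := hP.lam_pos; linarith
      have := key m n
      have hnn : (0:ℝ) ≤ ‖(x m : H) - (x n : H)‖ := norm_nonneg _
      have hlt : (2 * lam + 1) * ‖(x m : H) - (x n : H)‖ < ε := by
        rw [lt_div_iff₀ h2l] at hd
        nlinarith
      nlinarith [hP.lam_pos]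
    obtain ⟨s, hs⟩ := cauchySeq_tendsto_of_complete hgC
    have hxt_tend : Tendsto xt atTop (𝓝 (s - cv)) := by
      have hrw : xt = fun n => (T0 (x n) + xt n) - T0 (x n) := by
        funext n; abel
      rw [hrw]
      exact hs.sub hx2
    have hadj : T0.adjoint ⟨(v : H), hW.le v.2⟩ = s - cv := by
      apply LinearPMap.adjoint_apply_eq hD
      intro z
      have h1 : Tendsto (fun n => ⟪xt n, (z : H)⟫_ℂ) atTop (𝓝 ⟪s - cv, (z : H)⟫_ℂ) :=
        hxt_tend.inner tendsto_const_nhds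
      have heq : (fun n => ⟪xt n, (z : H)⟫_ℂ) = fun n => ⟪((x n : H)), T0 z⟫_ℂ := by
        funext n
        exact (hP.sym z ⟨(x n : H), hP.dom_eq.le (x n).2⟩).symm
      rw [heq] at h1
      have h2 : Tendsto (fun n => ⟪((x n : H)), T0 z⟫_ℂ) atTop (𝓝 ⟪(v : H), T0 z⟫_ℂ) :=
        hx1.inner tendsto_const_nhds
      exact tendsto_nhds_unique h1 h2
    rw [bform_eq, hadj]
    have hfin1 : Tendsto (fun n => ⟪xt n, (u : H)⟫_ℂ) atTop (𝓝 ⟪s - cv, (u : H)⟫_ℂ) :=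
      hxt_tend.inner tendsto_const_nhds
    have heq2 : (fun n => ⟪xt n, (u : H)⟫_ℂ) = fun n => ⟪((x n : H)), T0t.adjoint u⟫_ℂ := by
      funext n
      have hfa := LinearPMap.adjoint_isFormalAdjoint hDt u ⟨(x n : H), hP.dom_eq.le (x n).2⟩
      calc ⟪xt n, (u : H)⟫_ℂ = starRingEnd ℂ ⟪(u : H), xt n⟫_ℂ := (inner_conj_symm _ _).symm
        _ = starRingEnd ℂ ⟪T0t.adjoint u, ((x n : H))⟫_ℂ := by rw [hfa]
        _ = ⟪((x n : H)), T0t.adjoint u⟫_ℂ := inner_conj_symm _ _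
    rw [heq2] at hfin1
    have hfin2 : Tendsto (fun n => ⟪((x n : H)), T0t.adjoint u⟫_ℂ) atTop
        (𝓝 ⟪(v : H), T0t.adjoint u⟫_ℂ) := hx1.inner tendsto_const_nhds
    rw [tendsto_nhds_unique hfin2 hfin1, sub_self]
  -- key B
  have keyB : ∀ u : T0t.adjoint.domain, (∀ v, bform T0 T0t hW u v = 0) →
      (u : H) ∈ T0.closure.domain := by
    intro u hu
    set e := WithLp.prodContinuousLinearEquiv 2 ℂ H H with he
    set K : Submodule ℂ (WithLp 2 (H × H)) :=
      T0.graph.comap e.toLinearEquiv.toLinearMap with hKdef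
    set q0 : WithLp 2 (H × H) := e.symm ((u : H), T0t.adjoint u) with hq0
    have hq0mem : q0 ∈ Kᗮᗮ := by
      rw [Submodule.mem_orthogonal]
      intro y hy
      rw [Submodule.mem_orthogonal] at hy
      have hxy : ∀ z : T0.domain, ⟪(z : H), (e y).1⟫_ℂ + ⟪T0 z, (e y).2⟫_ℂ = 0 := by
        intro z
        have hzK : e.symm ((z : H), T0 z) ∈ K := by
          rw [hKdef, Submodule.mem_comap]
          show (e (e.symm ((z : H), T0 z))) ∈ T0.graph
          rw [e.apply_symm_apply]
          exact T0.mem_graph z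
        have h0 := hy _ hzK
        rw [WithLp.prod_inner_apply] at h0
        exact h0
      have hb : ∀ z : T0.domain, ⟪-(e y).1, (z : H)⟫_ℂ = ⟪(e y).2, T0 z⟫_ℂ := by
        intro z
        have h0 := congrArg (starRingEnd ℂ) (hxy z)
        simp only [_root_.map_add, inner_conj_symm, _root_.map_zero] at h0
        rw [inner_neg_left]
        linear_combination -h0
      have hbmem : (e y).2 ∈ T0.adjoint.domain :=
        LinearPMap.mem_adjoint_domain_of_exists _ ⟨-(e y).1, hb⟩
      have hbval : T0.adjoint ⟨(e y).2, hbmem⟩ = -(e y).1 :=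
        LinearPMap.adjoint_apply_eq hD _ hb
      have hvb := hu ⟨(e y).2, hW.ge hbmem⟩
      rw [bform_eq] at hvb
      have hvb' : ⟪(e y).2, T0t.adjoint u⟫_ℂ - ⟪-(e y).1, (u : H)⟫_ℂ = 0 := by
        rw [← hbval]; exact hvb
      rw [inner_neg_left] at hvb'
      rw [WithLp.prod_inner_apply]
      show ⟪(e y).1, (u : H)⟫_ℂ + ⟪(e y).2, T0t.adjoint u⟫_ℂ = 0
      linear_combination hvb'
    have hq0cl : q0 ∈ K.topologicalClosure := by
      rw [← Submodule.orthogonal_orthogonal_eq_closure]; exact hq0mem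
    have h1 : q0 ∈ closure (K : Set (WithLp 2 (H × H))) := by
      rw [← Submodule.topologicalClosure_coe]; exact hq0cl
    have h2 : (K : Set (WithLp 2 (H × H))) = ⇑e ⁻¹' (T0.graph : Set (H × H)) := rfl
    rw [h2] at h1
    have h3 : e q0 ∈ closure (T0.graph : Set (H × H)) :=
      e.continuous.closure_preimage_subset _ h1
    rw [hq0, e.apply_symm_apply] at h3
    have h4 : (((u : H), T0t.adjoint u) : H × H) ∈ T0.closure.graph := by
      rw [← hclgraph]
      show _ ∈ (T0.graph.topologicalClosure : Set (H × H))
      rw [Submodule.topologicalClosure_coe]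
      exact h3
    exact LinearPMap.mem_domain_iff.mpr ⟨T0t.adjoint u, h4⟩
  refine ⟨fun u => ⟨keyA u, keyB u⟩, ?_, ?_⟩
  · ext u
    constructor
    · intro h
      exact keyB u (fun v => h v (Set.mem_univ v))
    · intro h v _
      exact keyA u h v
  · refine Set.eq_univ_of_forall fun u => ?_
    exact fun v hv => keyC u v hv
end
end

section
/- Let (T0, T̃0) be a joint pair of abstract Friedrichs operators on a complex Hilbert space H, with constant μ > 0 from condition (T3). If V is a subspace of the graph space W with W0 ⊆ V ⊆ W⁺, then ‖T1 u‖ ≥ μ‖u‖ for every u ∈ V; in particular, the closure of the range of T1 restricted to V equals the range of the closure of T1 restricted to V. Analogously, if Ṽ is a subspace of W with W0 ⊆ Ṽ ⊆ W⁻, then ‖T̃1 v‖ ≥ μ‖v‖ for every v ∈ Ṽ. -/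
open scoped InnerProductSpace
open Filter Topology LinearPMap

noncomputable section

variable {H : Type*} [NormedAddCommGroup H] [InnerProductSpace ℂ H] [CompleteSpace H]

section AuxLemmas

theorem my_adjoint_isClosed (T : H →ₗ.[ℂ] H) (hT : Dense (T.domain : Set H)) :
    T.adjoint.IsClosed := by
  have hset : (T.adjoint.graph : Set (H × H)) =
      ⋂ x : T.domain, {p : H × H | ⟪p.2, (x : H)⟫_ℂ = ⟪p.1, T x⟫_ℂ} := by
    ext ⟨u, v⟩
    simp only [Set.mem_iInter, Set.mem_setOf_eq, SetLike.mem_coe]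
    constructor
    · rintro h x
      rcases (LinearPMap.mem_graph_iff _).mp h with ⟨y, hy1, hy2⟩
      have := LinearPMap.adjoint_isFormalAdjoint hT y x
      simp only [] at hy1 hy2
      rw [show u = (y : H) from hy1.symm, show v = T.adjoint y from hy2.symm]
      exact this
    · intro h
      have hu : u ∈ T.adjoint.domain :=
        LinearPMap.mem_adjoint_domain_of_exists _ ⟨v, fun x => h x⟩
      have hv : T.adjoint ⟨u, hu⟩ = v :=
        LinearPMap.adjoint_apply_eq hT ⟨u, hu⟩ (fun x => h x)
      have := T.adjoint.mem_graph ⟨u, hu⟩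
      rwa [hv] at this
  rw [LinearPMap.IsClosed, hset]
  exact isClosed_iInter fun x =>
    isClosed_eq ((continuous_snd.inner continuous_const))
      ((continuous_fst.inner continuous_const))

theorem my_coercive (T0 T0t : H →ₗ.[ℂ] H) (lam mu : ℝ) (hF : IsFriedrichsPair T0 T0t lam mu)
    (hW : T0t.adjoint.domain = T0.adjoint.domain) (u : T0t.adjoint.domain) :
    2 * mu * ‖(u : H)‖ ^ 2 ≤
      (⟪(T0t.adjoint u + T0.adjoint ⟨(u : H), hW.le u.2⟩ : H), (u : H)⟫_ℂ).re := by
  have hdt : Dense (T0t.domain : Set H) := hF.dom_eq ▸ hF.dense'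
  have hd : Dense (T0.domain : Set H) := hF.dense'
  set g : H := T0t.adjoint u + T0.adjoint ⟨(u : H), hW.le u.2⟩ with hg
  obtain ⟨φ, hφmem, hφ⟩ := mem_closure_iff_seq_limit.mp (hd.closure_eq ▸ Set.mem_univ (u : H) :
    (u : H) ∈ closure (T0.domain : Set H))
  set S : ℕ → H := fun n => T0 ⟨φ n, hφmem n⟩ + T0t ⟨φ n, hF.dom_eq.le (hφmem n)⟩ with hS
  have hkey : ∀ n, ⟪g, φ n⟫_ℂ = ⟪(u : H), S n⟫_ℂ := by
    intro n
    have h1 : ⟪(T0t.adjoint u : H), φ n⟫_ℂ = ⟪(u : H), T0t ⟨φ n, hF.dom_eq.le (hφmem n)⟩⟫_ℂ :=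
      LinearPMap.adjoint_isFormalAdjoint hdt u ⟨φ n, hF.dom_eq.le (hφmem n)⟩
    have h2 : ⟪(T0.adjoint ⟨(u : H), hW.le u.2⟩ : H), φ n⟫_ℂ
        = ⟪(u : H), T0 ⟨φ n, hφmem n⟩⟫_ℂ :=
      LinearPMap.adjoint_isFormalAdjoint hd ⟨(u : H), hW.le u.2⟩ ⟨φ n, hφmem n⟩
    simp only [hg, hS, inner_add_left, inner_add_right, h1, h2]
    ring
  have hlim1 : Tendsto (fun n => (⟪g, φ n⟫_ℂ).re) atTop (𝓝 (⟪g, (u : H)⟫_ℂ).re) := by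
    have : Tendsto (fun n => ⟪g, φ n⟫_ℂ) atTop (𝓝 ⟪g, (u : H)⟫_ℂ) :=
      Tendsto.inner tendsto_const_nhds hφ
    exact (Complex.continuous_re.tendsto _).comp this
  have hlow : ∀ n, 2 * mu * ‖φ n‖ ^ 2 - 2 * lam * ‖(u : H) - φ n‖ * ‖φ n‖
      ≤ (⟪g, φ n⟫_ℂ).re := by
    intro n
    rw [hkey n]
    have hsplit : ⟪(u : H), S n⟫_ℂ = ⟪φ n, S n⟫_ℂ + ⟪(u : H) - φ n, S n⟫_ℂ := by
      rw [← inner_add_left]; congr 1; abel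
    have hco : 2 * mu * ‖φ n‖ ^ 2 ≤ (⟪φ n, S n⟫_ℂ).re := hF.coercive (φ n) (hφmem n)
    have hb : ‖S n‖ ≤ 2 * lam * ‖φ n‖ := hF.bound (φ n) (hφmem n)
    have habs : |(⟪(u : H) - φ n, S n⟫_ℂ).re| ≤ ‖(u : H) - φ n‖ * (2 * lam * ‖φ n‖) := by
      calc |(⟪(u : H) - φ n, S n⟫_ℂ).re| ≤ ‖⟪(u : H) - φ n, S n⟫_ℂ‖ := Complex.abs_re_le_norm _
        _ ≤ ‖(u : H) - φ n‖ * ‖S n‖ := norm_inner_le_norm _ _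
        _ ≤ ‖(u : H) - φ n‖ * (2 * lam * ‖φ n‖) :=
            mul_le_mul_of_nonneg_left hb (norm_nonneg _)
    rw [hsplit]
    simp only [Complex.add_re]
    have := neg_abs_le ((⟪(u : H) - φ n, S n⟫_ℂ).re)
    nlinarith [abs_nonneg ((⟪(u : H) - φ n, S n⟫_ℂ).re)]
  have hnφ : Tendsto (fun n => ‖φ n‖) atTop (𝓝 ‖(u : H)‖) :=
    (continuous_norm.tendsto _).comp hφ
  have hdφ : Tendsto (fun n => ‖(u : H) - φ n‖) atTop (𝓝 0) := by
    have : Tendsto (fun n => (u : H) - φ n) atTop (𝓝 ((u : H) - (u : H))) :=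
      tendsto_const_nhds.sub hφ
    rw [sub_self] at this
    simpa [Function.comp_def] using (continuous_norm.tendsto _).comp this
  have hlim2 : Tendsto (fun n => 2 * mu * ‖φ n‖ ^ 2 - 2 * lam * ‖(u : H) - φ n‖ * ‖φ n‖)
      atTop (𝓝 (2 * mu * ‖(u : H)‖ ^ 2)) := by
    have h1 : Tendsto (fun n => 2 * mu * ‖φ n‖ ^ 2) atTop (𝓝 (2 * mu * ‖(u : H)‖ ^ 2)) :=
      (tendsto_const_nhds.mul (hnφ.pow 2))
    have h2 : Tendsto (fun n => 2 * lam * ‖(u : H) - φ n‖ * ‖φ n‖) atTop (𝓝 0) := by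
      have h3 : Tendsto (fun n => 2 * lam * ‖(u : H) - φ n‖ * ‖φ n‖) atTop
          (𝓝 (2 * lam * 0 * ‖(u : H)‖)) :=
        ((tendsto_const_nhds : Tendsto (fun _ : ℕ => 2 * lam) atTop _).mul hdφ).mul hnφ
      simpa using h3
    simpa using h1.sub h2
  exact le_of_tendsto_of_tendsto' hlim2 hlim1 hlow

theorem my_re_symm (x y : H) : (⟪x, y⟫_ℂ).re = (⟪y, x⟫_ℂ).re := by
  rw [← inner_conj_symm x y]
  exact Complex.conj_re _

theorem my_lb1 (T0 T0t : H →ₗ.[ℂ] H) (lam mu : ℝ) (hF : IsFriedrichsPair T0 T0t lam mu)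
    (hW : T0t.adjoint.domain = T0.adjoint.domain) (u : T0t.adjoint.domain)
    (hu : 0 ≤ (bform T0 T0t hW u u).re) : mu * ‖(u : H)‖ ≤ ‖(T0t.adjoint u : H)‖ := by
  have hc := my_coercive T0 T0t lam mu hF hW u
  set a : H := T0t.adjoint u with ha
  set b : H := T0.adjoint ⟨(u : H), hW.le u.2⟩ with hb
  have h1 : (⟪(a + b : H), (u : H)⟫_ℂ).re = (⟪a, (u : H)⟫_ℂ).re + (⟪b, (u : H)⟫_ℂ).re := by
    rw [inner_add_left]; exact Complex.add_re _ _
  have h2 : (bform T0 T0t hW u u).re = (⟪a, (u : H)⟫_ℂ).re - (⟪b, (u : H)⟫_ℂ).re := by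
    simp only [bform, pInner, Complex.sub_re, ← ha, ← hb]
    rw [my_re_symm (u : H) a]
  rw [h1] at hc
  rw [h2] at hu
  have h3 : mu * ‖(u : H)‖ ^ 2 ≤ (⟪a, (u : H)⟫_ℂ).re := by linarith
  have h4 : (⟪a, (u : H)⟫_ℂ).re ≤ ‖a‖ * ‖(u : H)‖ := by
    calc (⟪a, (u : H)⟫_ℂ).re ≤ |(⟪a, (u : H)⟫_ℂ).re| := le_abs_self _
      _ ≤ ‖⟪a, (u : H)⟫_ℂ‖ := Complex.abs_re_le_norm _
      _ ≤ ‖a‖ * ‖(u : H)‖ := norm_inner_le_norm _ _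
  by_cases h0 : ‖(u : H)‖ = 0
  · rw [h0, mul_zero]; exact norm_nonneg _
  · have hpos : 0 < ‖(u : H)‖ := lt_of_le_of_ne (norm_nonneg _) (Ne.symm h0)
    have : mu * ‖(u : H)‖ * ‖(u : H)‖ ≤ ‖a‖ * ‖(u : H)‖ := by nlinarith
    exact le_of_mul_le_mul_right this hpos

theorem my_lb2 (T0 T0t : H →ₗ.[ℂ] H) (lam mu : ℝ) (hF : IsFriedrichsPair T0 T0t lam mu)
    (hW : T0t.adjoint.domain = T0.adjoint.domain) (u : T0t.adjoint.domain)
    (hu : (bform T0 T0t hW u u).re ≤ 0) :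
    mu * ‖(u : H)‖ ≤ ‖(T0.adjoint ⟨(u : H), hW.le u.2⟩ : H)‖ := by
  have hc := my_coercive T0 T0t lam mu hF hW u
  set a : H := T0t.adjoint u with ha
  set b : H := T0.adjoint ⟨(u : H), hW.le u.2⟩ with hb
  have h1 : (⟪(a + b : H), (u : H)⟫_ℂ).re = (⟪a, (u : H)⟫_ℂ).re + (⟪b, (u : H)⟫_ℂ).re := by
    rw [inner_add_left]; exact Complex.add_re _ _
  have h2 : (bform T0 T0t hW u u).re = (⟪a, (u : H)⟫_ℂ).re - (⟪b, (u : H)⟫_ℂ).re := by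
    simp only [bform, pInner, Complex.sub_re, ← ha, ← hb]
    rw [my_re_symm (u : H) a]
  rw [h1] at hc
  rw [h2] at hu
  have h3 : mu * ‖(u : H)‖ ^ 2 ≤ (⟪b, (u : H)⟫_ℂ).re := by linarith
  have h4 : (⟪b, (u : H)⟫_ℂ).re ≤ ‖b‖ * ‖(u : H)‖ := by
    calc (⟪b, (u : H)⟫_ℂ).re ≤ |(⟪b, (u : H)⟫_ℂ).re| := le_abs_self _
      _ ≤ ‖⟪b, (u : H)⟫_ℂ‖ := Complex.abs_re_le_norm _
      _ ≤ ‖b‖ * ‖(u : H)‖ := norm_inner_le_norm _ _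
  by_cases h0 : ‖(u : H)‖ = 0
  · rw [h0, mul_zero]; exact norm_nonneg _
  · have hpos : 0 < ‖(u : H)‖ := lt_of_le_of_ne (norm_nonneg _) (Ne.symm h0)
    have : mu * ‖(u : H)‖ * ‖(u : H)‖ ≤ ‖b‖ * ‖(u : H)‖ := by nlinarith
    exact le_of_mul_le_mul_right this hpos

theorem my_range (T : H →ₗ.[ℂ] H) (mu : ℝ) (hmu : 0 < mu) (hcl : T.IsClosable)
    (hb : ∀ x : T.domain, mu * ‖(x : H)‖ ≤ ‖T x‖) :
    closure {y : H | ∃ u : T.domain, T u = y} =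
      {y : H | ∃ u : T.closure.domain, T.closure u = y} := by
  set R : Set H := {y : H | ∃ u : T.domain, T u = y} with hR
  apply Set.Subset.antisymm
  · intro y hy
    obtain ⟨f, hfR, hf⟩ := mem_closure_iff_seq_limit.mp hy
    choose u hu using hfR
    have hfc : CauchySeq f := hf.cauchySeq
    have huc : CauchySeq (fun n => (u n : H)) := by
      rw [Metric.cauchySeq_iff'] at hfc ⊢
      intro ε hε
      obtain ⟨N, hN⟩ := hfc (mu * ε) (by positivity)
      refine ⟨N, fun n hn => ?_⟩
      have hbb := hb (u n - u N)
      rw [LinearPMap.map_sub, hu n, hu N] at hbb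
      have h1 : ((u n - u N : T.domain) : H) = (u n : H) - (u N : H) := rfl
      rw [h1] at hbb
      have h2 := hN n hn
      rw [dist_eq_norm] at h2 ⊢
      nlinarith [norm_nonneg ((u n : H) - (u N : H))]
    obtain ⟨x, hx⟩ := cauchySeq_tendsto_of_complete huc
    have hmem : (x, y) ∈ T.closure.graph := by
      have hcls := hcl.closure_isClosed
      have hseq : Tendsto (fun n => ((u n : H), f n)) atTop (𝓝 (x, y)) :=
        hx.prodMk_nhds hf
      have hmemg : ∀ n, ((u n : H), f n) ∈ (T.closure.graph : Set (H × H)) := by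
        intro n
        have : ((u n : H), T (u n)) ∈ T.graph := T.mem_graph (u n)
        rw [hu n] at this
        rw [← hcl.graph_closure_eq_closure_graph]
        exact T.graph.le_topologicalClosure this
      exact hcls.mem_of_tendsto hseq (Filter.Eventually.of_forall hmemg)
    rcases (LinearPMap.mem_graph_iff _).mp hmem with ⟨z, hz1, hz2⟩
    exact ⟨z, hz2⟩
  · rintro y ⟨v, hv⟩
    have hgr : ((v : H), y) ∈ T.closure.graph := by
      have := T.closure.mem_graph v
      rwa [hv] at this
    rw [← hcl.graph_closure_eq_closure_graph] at hgr
    have hsub : (T.graph : Set (H × H)) ⊆ {p : H × H | p.2 ∈ closure R} := by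
      rintro p hp
      rcases (LinearPMap.mem_graph_iff _).mp hp with ⟨x, hx1, hx2⟩
      exact subset_closure ⟨x, hx2⟩
    have hcl2 : IsClosed {p : H × H | p.2 ∈ closure R} :=
      IsClosed.preimage continuous_snd isClosed_closure
    have hmm : ((v : H), y) ∈ closure (T.graph : Set (H × H)) := by
      rwa [← Submodule.topologicalClosure_coe] at *
    exact closure_minimal hsub hcl2 hmm

end AuxLemmas

/-- Theorem 2.3 (x): if `W₀ ⊆ V ⊆ W⁺`, then `‖T₁u‖ ≥ μ‖u‖` on `V` and
`closure (ran T₁|_V) = ran (closure of T₁|_V)`; analogously, if `W₀ ⊆ Ṽ ⊆ W⁻`,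
then `‖T̃₁v‖ ≥ μ‖v‖` on `Ṽ`. -/
theorem lower_bound_on_nonneg_subspace
    (T0 T0t : H →ₗ.[ℂ] H) (lam mu : ℝ) (hF : IsFriedrichsPair T0 T0t lam mu)
    (hW : T0t.adjoint.domain = T0.adjoint.domain) :
    (∀ (V : Submodule ℂ H) (_h0 : T0.closure.domain ≤ V)
        (hVW : V ≤ T0t.adjoint.domain),
      (∀ (u : H) (hu : u ∈ V),
        0 ≤ (bform T0 T0t hW ⟨u, hVW hu⟩ ⟨u, hVW hu⟩).re) →
      (∀ (u : H) (hu : u ∈ V), mu * ‖u‖ ≤ ‖T0t.adjoint ⟨u, hVW hu⟩‖) ∧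
      closure {y : H | ∃ u : (T0t.adjoint.domRestrict V).domain,
          (T0t.adjoint.domRestrict V) u = y} =
        {y : H | ∃ u : (T0t.adjoint.domRestrict V).closure.domain,
          (T0t.adjoint.domRestrict V).closure u = y}) ∧
    (∀ (Vt : Submodule ℂ H) (_h0 : T0.closure.domain ≤ Vt)
        (hVW : Vt ≤ T0t.adjoint.domain),
      (∀ (v : H) (hv : v ∈ Vt),
        (bform T0 T0t hW ⟨v, hVW hv⟩ ⟨v, hVW hv⟩).re ≤ 0) →
      ∀ (v : H) (hv : v ∈ Vt),
        mu * ‖v‖ ≤ ‖T0.adjoint ⟨v, hW.le (hVW hv)⟩‖) := by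
  have hdt : Dense (T0t.domain : Set H) := hF.dom_eq ▸ hF.dense'
  constructor
  · intro V _h0 hVW hVplus
    have hbd : ∀ (u : H) (hu : u ∈ V), mu * ‖u‖ ≤ ‖T0t.adjoint ⟨u, hVW hu⟩‖ := by
      intro u hu
      exact my_lb1 T0 T0t lam mu hF hW ⟨u, hVW hu⟩ (hVplus u hu)
    refine ⟨hbd, ?_⟩
    set T : H →ₗ.[ℂ] H := T0t.adjoint.domRestrict V with hT
    have hclosable : T.IsClosable :=
      ((my_adjoint_isClosed T0t hdt).isClosable).leIsClosable LinearPMap.domRestrict_le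
    have hb : ∀ x : T.domain, mu * ‖(x : H)‖ ≤ ‖T x‖ := by
      intro x
      have hx1 : (x : H) ∈ V := x.2.1
      have hTx : T x = T0t.adjoint ⟨(x : H), hVW hx1⟩ :=
        LinearPMap.domRestrict_apply (rfl : ((x : H)) = _)
      rw [hTx]
      exact hbd (x : H) hx1
    exact my_range T mu hF.mu_pos hclosable hb
  · intro Vt _h0 hVW hVminus v hv
    exact my_lb2 T0 T0t lam mu hF hW ⟨v, hVW hv⟩ (hVminus v hv)
end
end
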